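/- Let C = (C, ∧, ∨, ℓ, r, 1) be an idempotent Galois connection, with multiplication x·y = x ∧ y if x ≤ y^ℓ and x·y = x ∨ y if y^ℓ < x, and division x\y = x^r ∨ y if x ≤ y and x\y = x^r ∧ y if y < x. Then the residuation law holds: for all x, y, z, x·y ≤ z if and only if y ≤ x\z. -/
import Mathlib


/-- In an idempotent Galois connection, with multiplication
`x·y = x ∧ y` if `x ≤ y^ℓ`, `x·y = x ∨ y` if `y^ℓ < x`, and division
`x\y = x^r ∨ y` if `x ≤ y`, `x\y = x^r ∧ y` if `y < x`, the residuation
law `x·y ≤ z ↔ y ≤ x\z` holds. -/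
theorem stmt9 {A : Type*} [LinearOrder A] [One A]
    (l r : A → A)
    (l1 : l 1 = 1) (r1 : r 1 = 1)
    (gal1 : ∀ x : A, x ≤ r (l x)) (gal2 : ∀ x : A, x ≤ l (r x))
    (lsup : ∀ x y : A, l (x ⊔ y) = l x ⊓ l y)
    (rsup : ∀ x y : A, r (x ⊔ y) = r x ⊓ r y)
    (lrl : ∀ x : A, l (r (l x)) = l x)
    (rlr : ∀ x : A, r (l (r x)) = r x)
    (split : ∀ x y : A, y ≤ r x ⊓ l x ∨ r x ⊔ l x ≤ y)
    (m : A → A → A)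
    (mdef : ∀ x y : A, (x ≤ l y → m x y = x ⊓ y) ∧ (l y < x → m x y = x ⊔ y))
    (d : A → A → A)
    (ddef : ∀ x y : A, (x ≤ y → d x y = r x ⊔ y) ∧ (y < x → d x y = r x ⊓ y)) :
    ∀ x y z : A, m x y ≤ z ↔ y ≤ d x z := by
  have lant : ∀ a b : A, a ≤ b → l b ≤ l a := by
    intro a b h
    have e := lsup a b
    rw [sup_eq_right.2 h] at e
    rw [e]; exact inf_le_left
  have rant : ∀ a b : A, a ≤ b → r b ≤ r a := by
    intro a b h
    have e := rsup a b
    rw [sup_eq_right.2 h] at e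
    rw [e]; exact inf_le_left
  have key : ∀ a b : A, a ≤ l b ↔ b ≤ r a := by
    intro a b
    constructor
    · intro h; exact le_trans (gal1 b) (rant _ _ h)
    · intro h; exact le_trans (gal2 a) (lant _ _ h)
  intro x y z
  rcases le_or_gt x (l y) with h | h
  · have hm := (mdef x y).1 h
    have hy : y ≤ r x := (key x y).1 h
    rcases le_or_gt x z with hz | hz
    · rw [hm, (ddef x z).1 hz]
      constructor
      · intro _; exact le_sup_of_le_left hy
      · intro _; exact le_trans inf_le_left hz
    · rw [hm, (ddef x z).2 hz]
      simp only [inf_le_iff, le_inf_iff]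
      constructor
      · intro hle; exact ⟨hy, hle.resolve_left hz.not_ge⟩
      · intro hle; exact Or.inr hle.2
  · have hm := (mdef x y).2 h
    have hry : r x < y := lt_of_not_ge fun hc => h.not_ge ((key x y).2 hc)
    rcases le_or_gt x z with hz | hz
    · rw [hm, (ddef x z).1 hz]
      simp only [sup_le_iff, le_sup_iff]
      constructor
      · intro hle; exact Or.inr hle.2
      · intro hle; exact ⟨hz, hle.resolve_left hry.not_ge⟩
    · rw [hm, (ddef x z).2 hz]
      simp only [sup_le_iff, le_inf_iff]
      exact iff_of_false (fun hc => hz.not_ge hc.1) (fun hc => hry.not_ge hc.1)
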